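/- In the case α > β + 1 of the multi-step memory setting, the Robust algorithm choosing x_t = argmin_x f(x, y_t) is optimal, i.e., its total cost equals the optimal offline cost (is at most cost(OPT)) for every input sequence. -/

import Mathlib

open Finset

/-- Cumulative cost with multi-step memory cost, ℤ-indexed actions. -/
noncomputable def costM {E : Type*} [NormedAddCommGroup E] [NormedSpace ℝ E]
    (q : ℕ) (C : ℕ → E →L[ℝ] E) (f : ℤ → E → ℝ) (x : ℤ → E) (s : ℤ) : ℝ :=
  ∑ t ∈ Finset.Icc 1 s, (f t (x t) + ‖x t - ∑ i ∈ Finset.Icc 1 q, C i (x (t - (i : ℤ)))‖)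

/-- In the case α > β + 1 of the multi-step memory setting, Robust is optimal:
its total cost is at most cost(OPT) on every input sequence. -/
theorem stmt3 {E : Type*} [NormedAddCommGroup E] [NormedSpace ℝ E]
    (T : ℤ) (q : ℕ) (C : ℕ → E →L[ℝ] E) (β : ℝ) (hβ : β = ∑ i ∈ Finset.Icc 1 q, ‖C i‖)
    (α : ℝ) (hα : 0 < α) (hcase : β + 1 < α) (f : ℤ → E → ℝ)
    (hf : ∀ t z, 0 ≤ f t z)
    (v : ℤ → E)
    (hmin : ∀ t z, f t (v t) ≤ f t z)
    (hpoly : ∀ t z, α * ‖z - v t‖ ≤ f t z - f t (v t))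
    (xπ : ℤ → E) (hπ : ∀ t : ℤ, 1 ≤ t → xπ t = v t)
    (xstar : ℤ → E) (hinit : ∀ s : ℤ, s ≤ 0 → xπ s = xstar s) :
    costM q C f xπ T ≤ costM q C f xstar T := by
  classical
  set D : ℤ → ℝ := fun s => ‖xstar s - xπ s‖ with hD
  have hDnn : ∀ s, 0 ≤ D s := fun s => norm_nonneg _
  have hD0 : ∀ s : ℤ, s ≤ 0 → D s = 0 := by
    intro s hs; simp [hD, hinit s hs]
  have hshift : ∀ i : ℤ, 0 ≤ i →
      ∑ t ∈ Icc (1:ℤ) T, D (t - i) ≤ ∑ t ∈ Icc (1:ℤ) T, D t := by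
    intro i hi
    have himg : (Icc (1:ℤ) T).image (fun t => t - i) = Icc (1 - i) (T - i) := by
      ext s; simp only [Finset.mem_image, Finset.mem_Icc]
      constructor
      · rintro ⟨t, ht, rfl⟩; omega
      · intro hs; exact ⟨s + i, by omega, by omega⟩
    have h1 : ∑ t ∈ Icc (1:ℤ) T, D (t - i) = ∑ s ∈ Icc (1 - i) (T - i), D s := by
      rw [← himg]
      exact (Finset.sum_image (by intro a _ b _ h; have h' : a - i = b - i := h; omega)).symm
    rw [h1]
    rw [← Finset.sum_filter_of_ne (p := fun s => 1 ≤ s)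
      (by intro s hs hne; by_contra h; exact hne (hD0 s (by omega)))]
    apply Finset.sum_le_sum_of_subset_of_nonneg
    · intro s hs
      simp only [Finset.mem_filter, Finset.mem_Icc] at hs ⊢
      omega
    · intro s _ _; exact hDnn s
  have step : ∀ t ∈ Icc (1:ℤ) T,
      f t (xπ t) + ‖xπ t - ∑ i ∈ Icc 1 q, C i (xπ (t - (i:ℤ)))‖ ≤
      (f t (xstar t) + ‖xstar t - ∑ i ∈ Icc 1 q, C i (xstar (t - (i:ℤ)))‖)
        + ((1 - α) * D t + ∑ i ∈ Icc 1 q, ‖C i‖ * D (t - (i:ℤ))) := by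
    intro t ht
    rw [Finset.mem_Icc] at ht
    have hx : xπ t = v t := hπ t ht.1
    have hDt : D t = ‖xstar t - v t‖ := by rw [hD]; simp [hx]
    have hf1 : f t (xπ t) ≤ f t (xstar t) - α * D t := by
      rw [hx, hDt]
      have := hpoly t (xstar t); linarith
    have hnorm : ‖xπ t - ∑ i ∈ Icc 1 q, C i (xπ (t - (i:ℤ)))‖ ≤
        ‖xstar t - ∑ i ∈ Icc 1 q, C i (xstar (t - (i:ℤ)))‖ + D t
          + ∑ i ∈ Icc 1 q, ‖C i‖ * D (t - (i:ℤ)) := by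
      have hdecomp : xπ t - ∑ i ∈ Icc 1 q, C i (xπ (t - (i:ℤ)))
          = (xstar t - ∑ i ∈ Icc 1 q, C i (xstar (t - (i:ℤ))))
            + (xπ t - xstar t)
            + ∑ i ∈ Icc 1 q, C i (xstar (t - (i:ℤ)) - xπ (t - (i:ℤ))) := by
        simp only [map_sub, Finset.sum_sub_distrib]; abel
      rw [hdecomp]
      refine (norm_add₃_le).trans ?_
      gcongr
      · exact le_of_eq (by rw [hD]; exact norm_sub_rev _ _)
      · refine (norm_sum_le _ _).trans ?_
        refine Finset.sum_le_sum fun i _ => ?_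
        exact (C i).le_opNorm _
    linarith
  unfold costM
  refine (Finset.sum_le_sum step).trans ?_
  rw [Finset.sum_add_distrib]
  have hDsum : 0 ≤ ∑ t ∈ Icc (1:ℤ) T, D t := Finset.sum_nonneg fun t _ => hDnn t
  have key : ∑ t ∈ Icc (1:ℤ) T,
      ((1 - α) * D t + ∑ i ∈ Icc 1 q, ‖C i‖ * D (t - (i:ℤ))) ≤ 0 := by
    rw [Finset.sum_add_distrib, ← Finset.mul_sum, Finset.sum_comm]
    have h2 : ∑ i ∈ Icc 1 q, ∑ t ∈ Icc (1:ℤ) T, ‖C i‖ * D (t - (i:ℤ)) ≤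
        β * ∑ t ∈ Icc (1:ℤ) T, D t := by
      rw [hβ, Finset.sum_mul]
      refine Finset.sum_le_sum fun i _ => ?_
      rw [← Finset.mul_sum]
      exact mul_le_mul_of_nonneg_left (hshift (i:ℤ) (by positivity)) (norm_nonneg _)
    have h3 : 0 ≤ (α - β - 1) * ∑ t ∈ Icc (1:ℤ) T, D t :=
      mul_nonneg (by linarith) hDsum
    nlinarith
  linarith
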